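/- arXiv:2512.21451 — 2 statements merged into one kernel-verified Lean document; each statement's English description precedes it below -/
import Mathlib

section
/- Let f : ℝ^n → ℝ be a pdf and F : (-ε, ε) × ℝ^n → ℝ a family of positive pdfs with F(0,·) = f. Assume: for almost every x, t ↦ F(t,x) is twice differentiable on (-ε, ε); the first and second t-derivatives of the integrand x ↦ f(x) log(f(x)/F(t,x)) are dominated uniformly in t by integrable functions of x; the first and second t-derivatives of F(t,x) are dominated uniformly in t by integrable functions of x; and the tangent vector h(x) = ∂F/∂t(0,x) satisfies ∫ h(x)²/f(x) dx < ∞. Then the map t ↦ D_KL(f‖F(t,·)) is twice differentiable at 0 and its second derivative at 0 equals the Fisher–Rao metric g_f(h,h) = ∫ h(x)²/f(x) dx. -/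
open MeasureTheory Set Real

open Filter Topology
open scoped Interval

/-- bound on rationals + continuity ⟹ bound on the open interval. -/
lemma aux_dense_bound {a b c : ℝ} {ψ : ℝ → ℝ}
    (hcont : ∀ t ∈ Ioo a b, ContinuousAt ψ t)
    (hq : ∀ q : ℚ, (q : ℝ) ∈ Ioo a b → ψ q ≤ c) :
    ∀ t ∈ Ioo a b, ψ t ≤ c := by
  intro t ht
  have hseq : ∀ k : ℕ, ∃ q : ℚ, t < (q : ℝ) ∧ (q : ℝ) < min b (t + 1 / (k + 1)) := by
    intro k
    apply exists_rat_btwn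
    apply lt_min ht.2
    have : (0:ℝ) < 1 / (k + 1) := by positivity
    linarith
  choose q hq1 hq2 using hseq
  have hmem : ∀ k, ((q k : ℝ)) ∈ Ioo a b := fun k =>
    ⟨lt_trans ht.1 (hq1 k), lt_of_lt_of_le (hq2 k) (min_le_left _ _)⟩
  have hub : Tendsto (fun k : ℕ => t + 1 / (k + 1 : ℝ)) atTop (𝓝 t) := by
    have := tendsto_one_div_add_atTop_nhds_zero_nat (𝕜 := ℝ)
    have h2 := (tendsto_const_nhds : Tendsto (fun _ : ℕ => t) atTop (𝓝 t)).add this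
    simpa using h2
  have htend : Tendsto (fun k => (q k : ℝ)) atTop (𝓝 t) :=
    tendsto_of_tendsto_of_tendsto_of_le_of_le tendsto_const_nhds hub
      (fun k => (hq1 k).le)
      (fun k => le_trans (hq2 k).le (min_le_right _ _))
  exact le_of_tendsto ((hcont t ht).tendsto.comp htend)
    (Eventually.of_forall fun k => hq (q k) (hmem k))

/-- difference quotients along a positive null sequence tend to the derivative. -/
lemma aux_slope {g : ℝ → ℝ} {d t : ℝ} (hd : HasDerivAt g d t) {a : ℕ → ℝ}
    (hpos : ∀ k, 0 < a k) (h0 : Tendsto a atTop (𝓝 0)) :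
    Tendsto (fun k => (g (t + a k) - g t) / a k) atTop (𝓝 d) := by
  have hs := hasDerivAt_iff_tendsto_slope.mp hd
  have h1 : Tendsto (fun k => t + a k) atTop (𝓝[≠] t) := by
    apply tendsto_nhdsWithin_of_tendsto_nhds_of_eventually_within
    · simpa using (tendsto_const_nhds : Tendsto (fun _ : ℕ => t) atTop (𝓝 t)).add h0
    · exact Eventually.of_forall fun k => by
        simp [mem_compl_singleton_iff, (hpos k).ne']
  have := hs.comp h1
  refine this.congr fun k => ?_
  simp [slope_def_field, Function.comp]

/-- FTC bound: derivative everywhere on interval, a.e.-bounded ⟹ Lipschitz estimate vs 0. -/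
lemma aux_lip {ψ ψ' : ℝ → ℝ} {c r t : ℝ} (hr : 0 < r) (ht : t ∈ Ioo (-r) r)
    (hderiv : ∀ s ∈ Ioo (-r) r, HasDerivAt ψ (ψ' s) s)
    (hbound : ∀ᵐ s ∂(volume.restrict (Ioo (-r) r)), |ψ' s| ≤ c) :
    |ψ t - ψ 0| ≤ c * |t| := by
  have h0 : (0:ℝ) ∈ Ioo (-r) r := ⟨neg_lt_zero.mpr hr, hr⟩
  have hsub : uIcc 0 t ⊆ Ioo (-r) r := Set.ordConnected_Ioo.uIcc_subset h0 ht
  have hsub' : Ι 0 t ⊆ Ioo (-r) r := fun s hs => hsub (Ioc_subset_Icc_self hs)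
  have hbound' : ∀ᵐ s ∂(volume : Measure ℝ), s ∈ Ι 0 t → |ψ' s| ≤ c := by
    have h2 := (ae_restrict_iff' measurableSet_Ioo).mp hbound
    filter_upwards [h2] with s hs hmem
    exact hs (hsub' hmem)
  have hmeas : AEStronglyMeasurable ψ' (volume.restrict (Ι 0 t)) := by
    apply (measurable_deriv ψ).aestronglyMeasurable.congr
    apply ae_restrict_of_forall_mem measurableSet_uIoc
    intro s hs
    exact (hderiv s (hsub' hs)).deriv
  have hfin : IsFiniteMeasure (volume.restrict (Ι 0 t)) := by
    constructor
    rw [Measure.restrict_apply_univ]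
    exact measure_Ioc_lt_top
  have hii : IntervalIntegrable ψ' volume 0 t := by
    rw [intervalIntegrable_iff]
    apply Integrable.mono' (integrable_const |c|) hmeas
    filter_upwards [ae_restrict_mem measurableSet_uIoc, ae_restrict_of_ae hbound'] with s h1 h2
    exact le_trans (h2 h1) (le_abs_self c)
  have hftc := intervalIntegral.integral_eq_sub_of_hasDerivAt
    (fun s hs => hderiv s (hsub hs)) hii
  have hle := intervalIntegral.norm_integral_le_of_norm_le_const_ae (C := c) (f := ψ')
    (a := 0) (b := t) (by simpa using hbound')
  rw [hftc] at hle
  simpa using hle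

lemma aux_deriv_phi {A : ℝ → ℝ} {A' c t : ℝ} (hc : 0 < c) (hA : HasDerivAt A A' t)
    (hev : ∀ᶠ u in 𝓝 t, 0 < A u) :
    HasDerivAt (fun u => c * Real.log (c / A u)) (-(c * A' / A t)) t := by
  have hpos : 0 < A t := hev.self_of_nhds
  have hlog : HasDerivAt (fun u => Real.log (A u)) (A' / A t) t := hA.log hpos.ne'
  have h1 : HasDerivAt (fun u => c * (Real.log c - Real.log (A u)))
      (c * -(A' / A t)) t := (hlog.const_sub (Real.log c)).const_mul c
  have h2 : (fun u => c * Real.log (c / A u)) =ᶠ[𝓝 t]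
      (fun u => c * (Real.log c - Real.log (A u))) := by
    filter_upwards [hev] with u hu
    rw [Real.log_div hc.ne' hu.ne']
  refine (HasDerivAt.congr_of_eventuallyEq ?_ h2)
  exact h1.congr_deriv (by ring)

lemma aux_deriv_phi1 {A B : ℝ → ℝ} {B' c t : ℝ} (hA : HasDerivAt A (B t) t)
    (hB : HasDerivAt B B' t) (hpos : 0 < A t) :
    HasDerivAt (fun u => -(c * B u / A u)) (-(c * (B' / A t - (B t / A t) ^ 2))) t := by
  have h1 := ((hB.div hA hpos.ne').const_mul c).neg
  have h2 : (fun u => -(c * B u / A u)) = (fun u => -(c * (B u / A u))) := by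
    funext u; ring
  rw [h2]
  exact h1.congr_deriv (by have := hpos.ne'; field_simp)

/-- a set null in the second coordinate is null for a product measure. -/
lemma aux_snd_null {β : Type*} [MeasurableSpace β] {ν : Measure β} [SFinite ν]
    (μ : Measure ℝ) [SFinite μ] {S : Set β} (hS : ν S = 0) :
    (μ.prod ν) {p : ℝ × β | p.2 ∈ S} = 0 := by
  have hsub : {p : ℝ × β | p.2 ∈ S} ⊆ univ ×ˢ toMeasurable ν S := fun p hp =>
    ⟨trivial, subset_toMeasurable _ _ hp⟩
  apply measure_mono_null hsub
  rw [Measure.prod_prod, measure_toMeasurable, hS, mul_zero]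

lemma aux_fst_mem {β : Type*} [MeasurableSpace β] {ν : Measure β} [SFinite ν]
    (μ : Measure ℝ) {J : Set ℝ} (hJ : MeasurableSet J) :
    ∀ᵐ p ∂((μ.restrict J).prod ν), p.1 ∈ J := by
  rw [ae_iff]
  have hsub : {p : ℝ × β | ¬ p.1 ∈ J} ⊆ Jᶜ ×ˢ (univ : Set β) := fun p hp => ⟨hp, trivial⟩
  apply measure_mono_null hsub
  rw [Measure.prod_prod, Measure.restrict_apply hJ.compl, compl_inter_self,
    measure_empty, zero_mul]

lemma aux_seq (c : ℝ) (hc : 0 < c) : ∃ a : ℕ → ℝ,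
    (∀ k, 0 < a k) ∧ (∀ k, a k ≤ c) ∧ Tendsto a atTop (𝓝 0) := by
  refine ⟨fun k => c / (k + 1), fun k => by positivity, fun k => ?_, ?_⟩
  · rw [div_le_iff₀ (by positivity)]
    nlinarith [Nat.cast_nonneg (α := ℝ) k]
  · have h2 := (tendsto_one_div_add_atTop_nhds_zero_nat (𝕜 := ℝ)).const_mul c
    simpa [div_eq_mul_inv] using h2

set_option maxHeartbeats 2000000 in
/-- Fisher information as the second derivative of the KL divergence:
along a smooth curve `F(t,·)` of positive pdfs through `f` (with suitable domination
hypotheses), `t ↦ D_KL(f ‖ F(t,·))` is twice differentiable at `0` and its second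
derivative at `0` equals `g_f(h,h) = ∫ h²/f`, where `h = ∂F/∂t(0,·)`. -/
theorem KL_second_derivative_eq_fisher_rao
    {n : ℕ} (hn : 1 ≤ n) (ε : ℝ) (hε : 0 < ε)
    (f : (Fin n → ℝ) → ℝ)
    (hf_meas : Measurable f) (hf_pos : ∀ x, 0 < f x)
    (hf_norm : ∫ x, f x = 1)
    (F F' F'' : ℝ → (Fin n → ℝ) → ℝ)
    (hF0 : F 0 = f)
    (hF_pos : ∀ t ∈ Ioo (-ε) ε, ∀ x, 0 < F t x)
    (hF_meas : ∀ t ∈ Ioo (-ε) ε, Measurable (F t))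
    (hF_norm : ∀ t ∈ Ioo (-ε) ε, ∫ x, F t x = 1)
    -- a.e. twice differentiability in t
    (hDeriv : ∀ᵐ x : Fin n → ℝ, ∀ t ∈ Ioo (-ε) ε,
      HasDerivAt (fun u => F u x) (F' t x) t)
    (hDeriv2 : ∀ᵐ x : Fin n → ℝ, ∀ t ∈ Ioo (-ε) ε,
      HasDerivAt (fun u => F' u x) (F'' t x) t)
    -- integrability of the KL integrand for each t
    (hInt : ∀ t ∈ Ioo (-ε) ε,
      Integrable (fun x => f x * Real.log (f x / F t x)))
    -- uniform-in-t domination of the first and second t-derivatives of the integrand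
    (g₁ g₂ : (Fin n → ℝ) → ℝ) (hg₁ : Integrable g₁) (hg₂ : Integrable g₂)
    (hDom₁ : ∀ t ∈ Ioo (-ε) ε, ∀ᵐ x : Fin n → ℝ,
      |f x * F' t x / F t x| ≤ g₁ x)
    (hDom₂ : ∀ t ∈ Ioo (-ε) ε, ∀ᵐ x : Fin n → ℝ,
      |f x * (F'' t x / F t x - (F' t x / F t x) ^ 2)| ≤ g₂ x)
    -- uniform-in-t domination of the first and second t-derivatives of F
    (G₁ G₂ : (Fin n → ℝ) → ℝ) (hG₁ : Integrable G₁) (hG₂ : Integrable G₂)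
    (hDomF₁ : ∀ t ∈ Ioo (-ε) ε, ∀ᵐ x : Fin n → ℝ, |F' t x| ≤ G₁ x)
    (hDomF₂ : ∀ t ∈ Ioo (-ε) ε, ∀ᵐ x : Fin n → ℝ, |F'' t x| ≤ G₂ x)
    -- the tangent vector h = F'(0,·) has finite Fisher–Rao length
    (h_sq : Integrable (fun x => F' 0 x ^ 2 / f x)) :
    ∃ D' : ℝ → ℝ,
      (∀ᶠ t in nhds 0,
        HasDerivAt (fun u => ∫ x, f x * Real.log (f x / F u x)) (D' t) t) ∧
      HasDerivAt D' (∫ x, F' 0 x ^ 2 / f x) 0 := by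
  classical
  set I : Set ℝ := Ioo (-ε) ε with hIdef
  have hI0 : (0:ℝ) ∈ I := ⟨neg_lt_zero.mpr hε, hε⟩
  have hInhds : I ∈ 𝓝 (0:ℝ) := isOpen_Ioo.mem_nhds hI0
  -- the good set of x
  have hP : ∀ᵐ x : Fin n → ℝ, (∀ t ∈ I, HasDerivAt (fun u => F u x) (F' t x) t) ∧
      (∀ t ∈ I, HasDerivAt (fun u => F' u x) (F'' t x) t) := hDeriv.and hDeriv2
  set N : Set (Fin n → ℝ) :=
    toMeasurable volume {x | ¬ ((∀ t ∈ I, HasDerivAt (fun u => F u x) (F' t x) t) ∧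
      (∀ t ∈ I, HasDerivAt (fun u => F' u x) (F'' t x) t))} with hNdef
  have hNmeas : MeasurableSet N := measurableSet_toMeasurable _ _
  have hNnull : volume N = 0 := by
    rw [hNdef, measure_toMeasurable]
    exact hP
  have hPnN : ∀ x ∉ N, (∀ t ∈ I, HasDerivAt (fun u => F u x) (F' t x) t) ∧
      (∀ t ∈ I, HasDerivAt (fun u => F' u x) (F'' t x) t) := by
    intro x hx
    by_contra h
    exact hx (subset_toMeasurable _ _ h)
  -- integrability of F t
  have hFint : ∀ t ∈ I, Integrable (F t) := by
    intro t ht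
    by_contra h
    have := hF_norm t ht
    rw [integral_undef h] at this
    norm_num at this
  -- measurability of sections of F' and F''
  have hF'aem : ∀ t ∈ I, AEMeasurable (F' t) := by
    intro t ht
    obtain ⟨a, hapos, hbd, ha0⟩ := aux_seq ((ε - t)/2) (by simp only [hIdef, mem_Ioo] at ht; linarith [ht.2])
    have hmem : ∀ k, t + a k ∈ I := by
      intro k
      have h1 := hapos k
      have h2 := hbd k
      simp only [hIdef, mem_Ioo] at ht ⊢
      constructor <;> linarith [ht.1, ht.2]
    apply aemeasurable_of_tendsto_metrizable_ae atTop
      (f := fun k x => (F (t + a k) x - F t x) / a k)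
    · intro k
      exact (((hF_meas _ (hmem k)).sub (hF_meas t ht)).div_const _).aemeasurable
    · filter_upwards [hDeriv] with x hx
      exact aux_slope (hx t ht) hapos ha0
  have hF''aem : ∀ t ∈ I, AEMeasurable (F'' t) := by
    intro t ht
    obtain ⟨a, hapos, hbd, ha0⟩ := aux_seq ((ε - t)/2) (by simp only [hIdef, mem_Ioo] at ht; linarith [ht.2])
    have hmem : ∀ k, t + a k ∈ I := by
      intro k
      have h1 := hapos k
      have h2 := hbd k
      simp only [hIdef, mem_Ioo] at ht ⊢
      constructor <;> linarith [ht.1, ht.2]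
    apply aemeasurable_of_tendsto_metrizable_ae atTop
      (f := fun k x => (F' (t + a k) x - F' t x) / a k)
    · intro k
      exact ((hF'aem _ (hmem k)).sub (hF'aem t ht)).div_const _
    · filter_upwards [hDeriv2] with x hx
      exact aux_slope (hx t ht) hapos ha0
  -- uniform domination of first derivatives via rational density
  have hQ1 : ∀ᵐ x : Fin n → ℝ, ∀ t ∈ I, |F' t x| ≤ G₁ x ∧ |f x * F' t x / F t x| ≤ g₁ x := by
    have hq : ∀ᵐ x : Fin n → ℝ, ∀ q : ℚ, (q : ℝ) ∈ I →
        (|F' q x| ≤ G₁ x ∧ |f x * F' q x / F q x| ≤ g₁ x) := by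
      rw [ae_all_iff]
      intro q
      by_cases hqI : (q : ℝ) ∈ I
      · filter_upwards [hDomF₁ q hqI, hDom₁ q hqI] with x h1 h2 _
        exact ⟨h1, h2⟩
      · filter_upwards with x h
        exact absurd h hqI
    filter_upwards [hq, hP] with x hx hPx
    intro t ht
    have hcF' : ∀ s ∈ I, ContinuousAt (fun u => F' u x) s :=
      fun s hs => (hPx.2 s hs).continuousAt
    have hcF : ∀ s ∈ I, ContinuousAt (fun u => F u x) s :=
      fun s hs => (hPx.1 s hs).continuousAt
    constructor
    · exact aux_dense_bound (fun s hs => (hcF' s hs).abs) (fun q hq' => (hx q hq').1) t ht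
    · refine aux_dense_bound (ψ := fun s => |f x * F' s x / F s x|) ?_
        (fun q hq' => (hx q hq').2) t ht
      intro s hs
      exact ((continuousAt_const.mul (hcF' s hs)).div (hcF s hs) (hF_pos s hs x).ne').abs
  -- balls inside I
  have hball : ∀ t₀ ∈ I, ∃ r > 0, Metric.ball t₀ r ⊆ I := by
    intro t₀ ht₀
    rcases Metric.isOpen_iff.mp isOpen_Ioo t₀ ht₀ with ⟨r, hr, hsub⟩
    exact ⟨r, hr, hsub⟩
  -- derivative formulas for the integrands
  have hφderiv : ∀ᵐ x : Fin n → ℝ, ∀ s ∈ I,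
      HasDerivAt (fun u => f x * Real.log (f x / F u x)) (-(f x * F' s x / F s x)) s := by
    filter_upwards [hP] with x hPx s hs
    apply aux_deriv_phi (hf_pos x) (hPx.1 s hs)
    filter_upwards [isOpen_Ioo.mem_nhds hs] with u hu using hF_pos u hu x
  have hφ1deriv : ∀ᵐ x : Fin n → ℝ, ∀ s ∈ I,
      HasDerivAt (fun u => -(f x * F' u x / F u x))
        (-(f x * (F'' s x / F s x - (F' s x / F s x) ^ 2))) s := by
    filter_upwards [hP] with x hPx s hs
    exact aux_deriv_phi1 (hPx.1 s hs) (hPx.2 s hs) (hF_pos s hs x)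
  -- Step A: derivative of the KL integral at every point of I
  have hStepA : ∀ t₀ ∈ I, HasDerivAt (fun u => ∫ x, f x * Real.log (f x / F u x))
      (∫ x, -(f x * F' t₀ x / F t₀ x)) t₀ := by
    intro t₀ ht₀
    obtain ⟨r, hr, hrI⟩ := hball t₀ ht₀
    refine (hasDerivAt_integral_of_dominated_loc_of_deriv_le (𝕜 := ℝ) (μ := volume) (Metric.ball_mem_nhds t₀ hr)
      (F := fun u x => f x * Real.log (f x / F u x))
      (F' := fun u x => -(f x * F' u x / F u x)) (bound := g₁)
      ?_ (hInt t₀ ht₀) ?_ ?_ hg₁ ?_).2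
    · filter_upwards [isOpen_Ioo.mem_nhds ht₀] with u hu
      exact (hf_meas.mul (Real.measurable_log.comp
        (hf_meas.div (hF_meas u hu)))).aestronglyMeasurable
    · exact (((hf_meas.aemeasurable.mul (hF'aem t₀ ht₀)).div
        (hF_meas t₀ ht₀).aemeasurable).neg).aestronglyMeasurable
    · filter_upwards [hQ1] with x hx u hu
      rw [Real.norm_eq_abs, abs_neg]
      exact (hx u (hrI hu)).2
    · filter_upwards [hφderiv] with x hx u hu
      exact hx u (hrI hu)
  -- Step B1: the integral of F' vanishes on I
  have hB1 : ∀ t₀ ∈ I, ∫ x, F' t₀ x = 0 := by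
    intro t₀ ht₀
    obtain ⟨r, hr, hrI⟩ := hball t₀ ht₀
    have key := (hasDerivAt_integral_of_dominated_loc_of_deriv_le (𝕜 := ℝ) (μ := volume) (Metric.ball_mem_nhds t₀ hr)
      (F := fun u x => F u x) (F' := fun u x => F' u x) (bound := G₁)
      ?_ (hFint t₀ ht₀) ?_ ?_ hG₁ ?_).2
    · have hconst : (fun u => ∫ x, F u x) =ᶠ[𝓝 t₀] (fun _ => (1:ℝ)) := by
        filter_upwards [isOpen_Ioo.mem_nhds ht₀] with u hu using hF_norm u hu
      have key2 : HasDerivAt (fun _ : ℝ => (1:ℝ)) (∫ x, F' t₀ x) t₀ :=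
        key.congr_of_eventuallyEq hconst.symm
      exact (key2.unique (hasDerivAt_const t₀ 1)).symm ▸ rfl
    · filter_upwards [isOpen_Ioo.mem_nhds ht₀] with u hu
      exact (hF_meas u hu).aestronglyMeasurable
    · exact (hF'aem t₀ ht₀).aestronglyMeasurable
    · filter_upwards [hQ1] with x hx u hu
      rw [Real.norm_eq_abs]
      exact (hx u (hrI hu)).1
    · filter_upwards [hDeriv] with x hx u hu
      exact hx u (hrI hu)
  -- ====== joint measurability and Fubini ======
  set J : Set ℝ := Ioo (-(ε/2)) (ε/2) with hJdef
  set Jp : Set ℝ := Ioo (-(ε/2)) (7*ε/8) with hJpdef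
  have hJI : J ⊆ I := by
    intro t ht; simp only [hJdef, hIdef, mem_Ioo] at *; constructor <;> linarith [ht.1, ht.2]
  have hJpI : Jp ⊆ I := by
    intro t ht; simp only [hJpdef, hIdef, mem_Ioo] at *; constructor <;> linarith [ht.1, ht.2]
  have hJJp : J ⊆ Jp := by
    intro t ht; simp only [hJdef, hJpdef, mem_Ioo] at *; constructor <;> linarith [ht.1, ht.2]
  set ρ : Measure (ℝ × (Fin n → ℝ)) := (volume.restrict J).prod volume with hρdef
  set ρp : Measure (ℝ × (Fin n → ℝ)) := (volume.restrict Jp).prod volume with hρpdef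
  obtain ⟨a, hapos, habd, ha0⟩ := aux_seq (ε/16) (by positivity)
  set proj : ℝ → ℝ := fun s => max (-(15*ε/16)) (min (15*ε/16) s) with hprojdef
  have hproj_mem : ∀ s, proj s ∈ I := by
    intro s
    simp only [hprojdef, hIdef, mem_Ioo]
    constructor
    · exact lt_of_lt_of_le (by linarith) (le_max_left _ _)
    · exact lt_of_le_of_lt (max_le (by linarith) (min_le_left _ _)) (by linarith)
  have hproj_id : ∀ s, -(15*ε/16) ≤ s → s ≤ 15*ε/16 → proj s = s := by
    intro s h1 h2
    simp only [hprojdef]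
    rw [min_eq_right h2, max_eq_right h1]
  have hproj_cont : Continuous proj := continuous_const.max (continuous_const.min continuous_id)
  set Fc : ℝ → (Fin n → ℝ) → ℝ := fun t x => if x ∈ N then 0 else F (proj t) x with hFcdef
  have hFc_meas : ∀ t, Measurable (Fc t) := fun t =>
    Measurable.ite hNmeas measurable_const (hF_meas _ (hproj_mem t))
  have hFc_cont : ∀ x, Continuous fun t => Fc t x := by
    intro x
    by_cases hx : x ∈ N
    · simpa [hFcdef, hx] using continuous_const
    · simp only [hFcdef, if_neg hx]
      rw [continuous_iff_continuousAt]
      intro s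
      exact (((hPnN x hx).1 (proj s) (hproj_mem s)).continuousAt).comp hproj_cont.continuousAt
  have hFc_jm : Measurable (Function.uncurry Fc) :=
    measurable_uncurry_of_continuous_of_measurable hFc_cont hFc_meas
  have hFc_eq : ∀ s x, -(15*ε/16) ≤ s → s ≤ 15*ε/16 → x ∉ N → Fc s x = F s x := by
    intro s x h1 h2 hx
    simp only [hFcdef, if_neg hx, hproj_id s h1 h2]
  have hNae : ∀ᵐ p ∂ρp, p.2 ∉ N := by
    rw [ae_iff]
    have : {p : ℝ × (Fin n → ℝ) | ¬ p.2 ∉ N} = {p : ℝ × (Fin n → ℝ) | p.2 ∈ N} := by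
      ext p; simp
    rw [this]
    exact aux_snd_null _ hNnull
  have hNaeρ : ∀ᵐ p ∂ρ, p.2 ∉ N := by
    rw [ae_iff]
    have : {p : ℝ × (Fin n → ℝ) | ¬ p.2 ∉ N} = {p : ℝ × (Fin n → ℝ) | p.2 ∈ N} := by
      ext p; simp
    rw [this]
    exact aux_snd_null _ hNnull
  have hfstp : ∀ᵐ p ∂ρp, p.1 ∈ Jp := aux_fst_mem _ measurableSet_Ioo
  have hfst : ∀ᵐ p ∂ρ, p.1 ∈ J := aux_fst_mem _ measurableSet_Ioo
  -- joint a.e.-measurability of F' on the strip Jp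
  have hu1 : AEMeasurable (fun p : ℝ × (Fin n → ℝ) => F' p.1 p.2) ρp := by
    apply aemeasurable_of_tendsto_metrizable_ae atTop
      (f := fun k (p : ℝ × (Fin n → ℝ)) => (Fc (p.1 + a k) p.2 - Fc p.1 p.2) / a k)
    · intro k
      have hmk : Measurable fun p : ℝ × (Fin n → ℝ) => Fc (p.1 + a k) p.2 :=
        hFc_jm.comp ((measurable_fst.add_const (a k)).prodMk measurable_snd)
      have hmk0 : Measurable fun p : ℝ × (Fin n → ℝ) => Fc p.1 p.2 :=
        hFc_jm.comp (measurable_fst.prodMk measurable_snd)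
      exact ((hmk.sub hmk0).div_const _).aemeasurable
    · filter_upwards [hfstp, hNae] with p hp1 hp2
      have hx := (hPnN p.2 hp2).1
      have hp1' : -(ε/2) < p.1 ∧ p.1 < 7*ε/8 := by
        simpa [hJpdef, mem_Ioo] using hp1
      have hbnds : ∀ k, Fc (p.1 + a k) p.2 = F (p.1 + a k) p.2 := by
        intro k
        exact hFc_eq _ _ (by linarith [hapos k, hp1'.1]) (by linarith [habd k, hp1'.2]) hp2
      have hbnd0 : Fc p.1 p.2 = F p.1 p.2 :=
        hFc_eq _ _ (by linarith [hp1'.1]) (by linarith [hp1'.2]) hp2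
      have hsl := aux_slope (hx p.1 (hJpI hp1)) hapos ha0
      refine hsl.congr fun k => ?_
      rw [hbnds k, hbnd0]
  obtain ⟨W, hWmeas, hWeq⟩ := hu1
  set A' : Set (ℝ × (Fin n → ℝ)) := toMeasurable ρp {p | ¬ F' p.1 p.2 = W p} with hA'def
  have hA'null : ρp A' = 0 := by
    rw [hA'def, measure_toMeasurable]
    exact ae_iff.mp hWeq
  have hA'meas : MeasurableSet A' := measurableSet_toMeasurable _ _
  have hA'sub : ∀ p : ℝ × (Fin n → ℝ), ¬ F' p.1 p.2 = W p → p ∈ A' :=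
    fun p hp => subset_toMeasurable _ _ hp
  set Tset : Set ℝ := {t : ℝ | volume (Prod.mk t ⁻¹' A') ≠ 0} with hTdef
  have hTmeas : MeasurableSet Tset := by
    have h1 := measurable_measure_prodMk_left (ν := (volume : Measure (Fin n → ℝ))) hA'meas
    exact h1 (measurableSet_singleton 0).compl
  have hTnull : volume (Tset ∩ Jp) = 0 := by
    have h1 := (Measure.measure_prod_null (μ := volume.restrict Jp)
      (ν := (volume : Measure (Fin n → ℝ))) hA'meas).mp hA'null
    have h2 := (ae_restrict_iff' measurableSet_Ioo).mp h1
    rw [ae_iff] at h2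
    apply measure_mono_null _ h2
    intro t ht
    simp only [mem_setOf_eq, Classical.not_imp]
    exact ⟨ht.2, ht.1⟩
  have hshift : ∀ k : ℕ, ρ {p : ℝ × (Fin n → ℝ) | (p.1 + a k, p.2) ∈ A'} = 0 := by
    intro k
    have hms : MeasurableSet {p : ℝ × (Fin n → ℝ) | (p.1 + a k, p.2) ∈ A'} :=
      hA'meas.preimage ((measurable_fst.add_const _).prodMk measurable_snd)
    rw [hρdef, Measure.measure_prod_null hms]
    have hnull2 : volume ((fun t : ℝ => t + a k) ⁻¹' (Tset ∩ Jp)) = 0 := by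
      rw [measure_preimage_add_right]
      exact hTnull
    rw [Filter.EventuallyEq, ae_restrict_iff' measurableSet_Ioo, ae_iff]
    apply measure_mono_null _ hnull2
    intro t ht
    simp only [mem_setOf_eq, Classical.not_imp] at ht
    have htJ : -(ε/2) < t ∧ t < ε/2 := by simpa [hJdef, mem_Ioo] using ht.1
    refine ⟨ht.2, ?_⟩
    simp only [hJpdef, mem_Ioo]
    constructor <;> linarith [hapos k, habd k, htJ.1, htJ.2]
  have hac : ρ ≪ ρp := by
    rw [hρdef, hρpdef]
    exact Measure.AbsolutelyContinuous.prod
      (Measure.absolutelyContinuous_of_le (Measure.restrict_mono hJJp le_rfl))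
      (Measure.AbsolutelyContinuous.refl _)
  have hA'ρnull : ρ A' = 0 := hac hA'null
  have hu1ρ : AEMeasurable (fun p : ℝ × (Fin n → ℝ) => F' p.1 p.2) ρ :=
    AEMeasurable.mono' ⟨W, hWmeas, hWeq⟩ hac
  have hu2 : AEMeasurable (fun p : ℝ × (Fin n → ℝ) => F'' p.1 p.2) ρ := by
    apply aemeasurable_of_tendsto_metrizable_ae atTop
      (f := fun k (p : ℝ × (Fin n → ℝ)) => (W (p.1 + a k, p.2) - W p) / a k)
    · intro k
      exact (((hWmeas.comp ((measurable_fst.add_const (a k)).prodMk measurable_snd)).sub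
        hWmeas).div_const _).aemeasurable
    · have hnotA : ∀ᵐ p ∂ρ, p ∉ A' := by
        rw [ae_iff]; simpa [not_not] using hA'ρnull
      have hshiftae : ∀ᵐ p ∂ρ, ∀ k : ℕ, (p.1 + a k, p.2) ∉ A' := by
        rw [ae_all_iff]
        intro k
        rw [ae_iff]; simpa [not_not] using hshift k
      filter_upwards [hfst, hNaeρ, hnotA, hshiftae] with p hp1 hp2 hp3 hp4
      have hx := (hPnN p.2 hp2).2
      have hW0 : F' p.1 p.2 = W p := by
        by_contra h; exact hp3 (hA'sub p h)
      have hWk : ∀ k : ℕ, F' (p.1 + a k) p.2 = W (p.1 + a k, p.2) := by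
        intro k
        by_contra h; exact hp4 k (hA'sub _ h)
      have hsl := aux_slope (hx p.1 (hJI hp1)) hapos ha0
      refine hsl.congr fun k => ?_
      rw [← hWk k, ← hW0]
  have hu0 : AEMeasurable (fun p : ℝ × (Fin n → ℝ) => F p.1 p.2) ρ := by
    refine ⟨Function.uncurry Fc, hFc_jm, ?_⟩
    filter_upwards [hfst, hNaeρ] with p hp1 hp2
    have hp1' : -(ε/2) < p.1 ∧ p.1 < ε/2 := by simpa [hJdef, mem_Ioo] using hp1
    exact (hFc_eq p.1 p.2 (by linarith [hp1'.1]) (by linarith [hp1'.2]) hp2).symm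
  have huφ₂ : AEMeasurable (fun p : ℝ × (Fin n → ℝ) =>
      f p.2 * (F'' p.1 p.2 / F p.1 p.2 - (F' p.1 p.2 / F p.1 p.2) ^ 2)) ρ :=
    (hf_meas.comp measurable_snd).aemeasurable.mul
      ((hu2.div hu0).sub ((hu1ρ.div hu0).pow_const 2))
  obtain ⟨Φ, hΦmeas, hΦeq⟩ := huφ₂
  obtain ⟨Ψ, hΨmeas, hΨeq⟩ := hu2
  obtain ⟨g2m, hg2m_sm, hg2m_eq⟩ := hg₂.1
  obtain ⟨G2m, hG2m_sm, hG2m_eq⟩ := hG₂.1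
  have hg2m_meas : Measurable g2m := hg2m_sm.measurable
  have hG2m_meas : Measurable G2m := hG2m_sm.measurable
  have hg₂ae : ∀ᵐ p ∂ρ, g₂ p.2 = g2m p.2 := by
    rw [ae_iff]
    exact measure_mono_null (fun p hp => hp) (aux_snd_null _ (ae_iff.mp hg2m_eq))
  have hG₂ae : ∀ᵐ p ∂ρ, G₂ p.2 = G2m p.2 := by
    rw [ae_iff]
    exact measure_mono_null (fun p hp => hp) (aux_snd_null _ (ae_iff.mp hG2m_eq))
  have hE : ∀ᵐ p ∂ρ, f p.2 * (F'' p.1 p.2 / F p.1 p.2 - (F' p.1 p.2 / F p.1 p.2) ^ 2) = Φ p ∧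
      F'' p.1 p.2 = Ψ p ∧ g₂ p.2 = g2m p.2 ∧ G₂ p.2 = G2m p.2 := by
    filter_upwards [hΦeq, hΨeq, hg₂ae, hG₂ae] with p h1 h2 h3 h4
    exact ⟨h1, h2, h3, h4⟩
  set Bad : Set (ℝ × (Fin n → ℝ)) :=
    {p : ℝ × (Fin n → ℝ) | ¬ (|Φ p| ≤ g2m p.2 ∧ |Ψ p| ≤ G2m p.2)} with hBaddef
  have hBadmeas : MeasurableSet Bad := by
    have h1 : MeasurableSet {p : ℝ × (Fin n → ℝ) | |Φ p| ≤ g2m p.2} :=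
      measurableSet_le hΦmeas.abs (hg2m_meas.comp measurable_snd)
    have h2 : MeasurableSet {p : ℝ × (Fin n → ℝ) | |Ψ p| ≤ G2m p.2} :=
      measurableSet_le hΨmeas.abs (hG2m_meas.comp measurable_snd)
    have : Bad = ({p : ℝ × (Fin n → ℝ) | |Φ p| ≤ g2m p.2} ∩
        {p : ℝ × (Fin n → ℝ) | |Ψ p| ≤ G2m p.2})ᶜ := by
      ext p
      simp [hBaddef, not_and_or, mem_inter_iff]
    rw [this]
    exact (h1.inter h2).compl
  have hBadnull : ρ Bad = 0 := by
    rw [hρdef, Measure.measure_prod_null hBadmeas]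
    have hE2 := Measure.ae_ae_of_ae_prod (hρdef ▸ hE)
    rw [Filter.EventuallyEq]
    filter_upwards [hE2, ae_restrict_mem measurableSet_Ioo] with t ht htJ
    simp only [Pi.zero_apply]
    rw [measure_eq_zero_iff_ae_notMem]
    filter_upwards [ht, hDom₂ t (hJI htJ), hDomF₂ t (hJI htJ)] with x hx h2 h3
    simp only [hBaddef, mem_preimage, mem_setOf_eq, not_not]
    constructor
    · rw [← hx.1, ← hx.2.2.1]
      exact h2
    · rw [← hx.2.1, ← hx.2.2.2]
      exact h3
  have hQ2prod : ∀ᵐ p ∂ρ,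
      |f p.2 * (F'' p.1 p.2 / F p.1 p.2 - (F' p.1 p.2 / F p.1 p.2) ^ 2)| ≤ g₂ p.2 ∧
      |F'' p.1 p.2| ≤ G₂ p.2 := by
    have hBadae : ∀ᵐ p ∂ρ, p ∉ Bad := by
      rw [ae_iff]; simpa [not_not] using hBadnull
    filter_upwards [hBadae, hE] with p hpB hpE
    simp only [hBaddef, mem_setOf_eq, not_not] at hpB
    constructor
    · rw [hpE.1, hpE.2.2.1]
      exact hpB.1
    · rw [hpE.2.1, hpE.2.2.2]
      exact hpB.2
  -- swap the order of the a.e. quantifiers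
  have hQ2 : ∀ᵐ x ∂(volume : Measure (Fin n → ℝ)), ∀ᵐ t ∂(volume.restrict J),
      |f x * (F'' t x / F t x - (F' t x / F t x) ^ 2)| ≤ g₂ x ∧ |F'' t x| ≤ G₂ x := by
    set C : Set (ℝ × (Fin n → ℝ)) := toMeasurable ρ
      {p : ℝ × (Fin n → ℝ) |
        ¬ (|f p.2 * (F'' p.1 p.2 / F p.1 p.2 - (F' p.1 p.2 / F p.1 p.2) ^ 2)| ≤ g₂ p.2 ∧
           |F'' p.1 p.2| ≤ G₂ p.2)} with hCdef
    have hCnull : ρ C = 0 := by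
      rw [hCdef, measure_toMeasurable]
      exact ae_iff.mp hQ2prod
    have hCmeas : MeasurableSet C := measurableSet_toMeasurable _ _
    have hswapnull : ((volume : Measure (Fin n → ℝ)).prod (volume.restrict J))
        (Prod.swap ⁻¹' C) = 0 := by
      have hmp := Measure.measurePreserving_swap (μ := (volume : Measure (Fin n → ℝ)))
        (ν := volume.restrict J)
      rw [hmp.measure_preimage hCmeas.nullMeasurableSet]
      exact hρdef ▸ hCnull
    have hae2 : ∀ᵐ q ∂((volume : Measure (Fin n → ℝ)).prod (volume.restrict J)),
        |f q.1 * (F'' q.2 q.1 / F q.2 q.1 - (F' q.2 q.1 / F q.2 q.1) ^ 2)| ≤ g₂ q.1 ∧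
        |F'' q.2 q.1| ≤ G₂ q.1 := by
      rw [ae_iff]
      apply measure_mono_null _ hswapnull
      intro q hq
      exact subset_toMeasurable _ _ hq
    exact Measure.ae_ae_of_ae_prod hae2
  -- pointwise-in-x Lipschitz estimates via FTC
  have hε2 : (0:ℝ) < ε/2 := by positivity
  have hLip : ∀ᵐ x ∂(volume : Measure (Fin n → ℝ)), ∀ t ∈ J,
      |-(f x * F' t x / F t x) - -(f x * F' 0 x / F 0 x)| ≤ g₂ x * |t| ∧
      |F' t x - F' 0 x| ≤ G₂ x * |t| := by
    filter_upwards [hQ2, hP] with x hQx hPx t ht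
    have ht' : t ∈ Ioo (-(ε/2)) (ε/2) := ht
    constructor
    · exact aux_lip (ψ := fun s => -(f x * F' s x / F s x))
        (ψ' := fun s => -(f x * (F'' s x / F s x - (F' s x / F s x) ^ 2))) hε2 ht'
        (fun s hs => aux_deriv_phi1 (hPx.1 s (hJI hs)) (hPx.2 s (hJI hs)) (hF_pos s (hJI hs) x))
        (by filter_upwards [hQx] with s hss
            rw [abs_neg]
            exact hss.1)
    · exact aux_lip (ψ := fun s => F' s x) (ψ' := fun s => F'' s x) hε2 ht'
        (fun s hs => hPx.2 s (hJI hs))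
        (by filter_upwards [hQx] with s hss using hss.2)
  have hJball : Metric.ball (0:ℝ) (ε/2) = J := by
    rw [Real.ball_eq_Ioo, zero_sub, zero_add]
  -- integrability facts at t = 0
  have hF'0int : Integrable (F' 0) := by
    refine Integrable.mono' hG₁ (hF'aem 0 hI0).aestronglyMeasurable ?_
    filter_upwards [hDomF₁ 0 hI0] with x h
    rwa [Real.norm_eq_abs]
  have hF''0int : Integrable (F'' 0) := by
    refine Integrable.mono' hG₂ (hF''aem 0 hI0).aestronglyMeasurable ?_
    filter_upwards [hDomF₂ 0 hI0] with x h
    rwa [Real.norm_eq_abs]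
  have hφ₂0aesm : AEStronglyMeasurable
      (fun x => -(f x * (F'' 0 x / F 0 x - (F' 0 x / F 0 x) ^ 2))) volume :=
    ((hf_meas.aemeasurable.mul (((hF''aem 0 hI0).div (hF_meas 0 hI0).aemeasurable).sub
      (((hF'aem 0 hI0).div (hF_meas 0 hI0).aemeasurable).pow_const 2))).neg).aestronglyMeasurable
  set L : ℝ →L[ℝ] (ℝ →L[ℝ] ℝ) := ContinuousLinearMap.smulRightL ℝ ℝ ℝ 1 with hLdef
  have hL1 : ∀ c : ℝ, (L c) 1 = c := fun c => by
    simp [hLdef, ContinuousLinearMap.smulRightL]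
  -- Step B4: second derivative of the KL divergence
  have hmain := hasFDerivAt_integral_of_dominated_loc_of_lip' (𝕜 := ℝ) (μ := volume)
    (F := fun t x => -(f x * F' t x / F t x)) (x₀ := (0:ℝ))
    (F' := fun x => L (-(f x * (F'' 0 x / F 0 x - (F' 0 x / F 0 x) ^ 2))))
    (bound := g₂) (Metric.ball_mem_nhds (0:ℝ) hε2) ?_ ?_ ?_ ?_ hg₂ ?_
  rotate_left
  · intro t htb
    rw [hJball] at htb
    exact (((hf_meas.aemeasurable.mul (hF'aem t (hJI htb))).div
      (hF_meas t (hJI htb)).aemeasurable).neg).aestronglyMeasurable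
  · refine Integrable.congr hF'0int.neg (Eventually.of_forall fun x => ?_)
    show -F' 0 x = -(f x * F' 0 x / F 0 x)
    rw [hF0, neg_inj, mul_comm (f x) (F' 0 x), mul_div_assoc, div_self (hf_pos x).ne', mul_one]
  · exact L.continuous.comp_aestronglyMeasurable hφ₂0aesm
  · filter_upwards [hLip] with x hx t htb
    rw [hJball] at htb
    have := (hx t htb).1
    simpa [Real.norm_eq_abs, sub_zero] using this
  · filter_upwards [hφ1deriv] with x hx
    exact hasDerivAt_iff_hasFDerivAt.mp (hx 0 hI0)
  obtain ⟨hint', key⟩ := hmain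
  have hDA := key.hasDerivAt
  rw [ContinuousLinearMap.integral_apply hint'] at hDA
  simp only [hL1] at hDA
  -- Step B4': derivative of t ↦ ∫ F' t at 0
  have hmain' := hasFDerivAt_integral_of_dominated_loc_of_lip' (𝕜 := ℝ) (μ := volume)
    (F := fun t x => F' t x) (x₀ := (0:ℝ))
    (F' := fun x => L (F'' 0 x))
    (bound := G₂) (Metric.ball_mem_nhds (0:ℝ) hε2) ?_ ?_ ?_ ?_ hG₂ ?_
  rotate_left
  · intro t htb
    rw [hJball] at htb
    exact (hF'aem t (hJI htb)).aestronglyMeasurable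
  · exact hF'0int
  · exact L.continuous.comp_aestronglyMeasurable (hF''aem 0 hI0).aestronglyMeasurable
  · filter_upwards [hLip] with x hx t htb
    rw [hJball] at htb
    have := (hx t htb).2
    simpa [Real.norm_eq_abs, sub_zero] using this
  · filter_upwards [hP] with x hPx
    exact hasDerivAt_iff_hasFDerivAt.mp (hPx.2 0 hI0)
  obtain ⟨hint'', key'⟩ := hmain'
  have hDA' := key'.hasDerivAt
  rw [ContinuousLinearMap.integral_apply hint''] at hDA'
  simp only [hL1] at hDA'
  -- the integral of F'' 0 vanishes
  have hIntF''0 : ∫ x, F'' 0 x = 0 := by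
    have hev0 : (fun t => ∫ x, F' t x) =ᶠ[𝓝 (0:ℝ)] fun _ => (0:ℝ) := by
      filter_upwards [hInhds] with t ht using hB1 t ht
    have h2 : HasDerivAt (fun _ : ℝ => (0:ℝ)) (∫ x, F'' 0 x) 0 :=
      hDA'.congr_of_eventuallyEq hev0.symm
    exact h2.unique (hasDerivAt_const 0 0)
  -- value of the second derivative
  have hval : ∫ x, -(f x * (F'' 0 x / F 0 x - (F' 0 x / F 0 x) ^ 2)) = ∫ x, F' 0 x ^ 2 / f x := by
    have heq : (fun x => -(f x * (F'' 0 x / F 0 x - (F' 0 x / F 0 x) ^ 2))) =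
        fun x => F' 0 x ^ 2 / f x - F'' 0 x := by
      funext x
      rw [hF0]
      have h := (hf_pos x).ne'
      field_simp
      ring
    rw [heq, integral_sub h_sq hF''0int, hIntF''0, sub_zero]
  refine ⟨fun t => ∫ x, -(f x * F' t x / F t x), ?_, ?_⟩
  · filter_upwards [hInhds] with t ht using hStepA t ht
  · rw [← hval]
    exact hDA
end

section
/- Let μ be the probability measure on ℝ^n with pdf f, let s : ℝ^n → ℝ^d be the vector of efficient score functions with each component in L²(μ), and suppose the d×d matrix G = ∫ s(x) s(x)ᵀ dμ(x) is positive definite. Let ψ : ℝ^n → ℝ^d be any influence function with each component in L²(μ) satisfying the unit-correlation identity ∫ ψ(x) s(x)ᵀ dμ(x) = I_d (the d×d identity matrix). Then the covariance matrix of ψ dominates G⁻¹ in the Loewner order: the matrix ∫ ψ(x) ψ(x)ᵀ dμ(x) − G⁻¹ is positive semidefinite. -/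
open MeasureTheory Matrix

private lemma memL2_integrable_mul {X : Type*} [MeasurableSpace X] {μ : Measure X}
    {f g : X → ℝ} (hf : MemLp f 2 μ) (hg : MemLp g 2 μ) :
    Integrable (fun x => f x * g x) μ := by
  have h1 := (hf.add hg).integrable_sq
  have h2 := hf.integrable_sq
  have h3 := hg.integrable_sq
  have h : (fun x => f x * g x)
      = fun x => (((f x + g x) ^ 2 - f x ^ 2) - g x ^ 2) / 2 := by
    funext x; ring
  rw [h]
  exact ((h1.sub h2).sub h3).div_const 2

private lemma integral_sum_mul_sum {X : Type*} [MeasurableSpace X] (μ : Measure X)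
    {d : ℕ} (a b : Fin d → ℝ) (p q : Fin d → X → ℝ)
    (h : ∀ i j, Integrable (fun x => p i x * q j x) μ) :
    ∫ x, (∑ i, a i * p i x) * (∑ j, b j * q j x) ∂μ
      = ∑ i, ∑ j, a i * b j * ∫ x, p i x * q j x ∂μ := by
  have key : ∀ x, (∑ i, a i * p i x) * (∑ j, b j * q j x)
      = ∑ i, ∑ j, (a i * b j) * (p i x * q j x) := by
    intro x
    rw [Finset.sum_mul_sum]
    refine Finset.sum_congr rfl fun i _ => Finset.sum_congr rfl fun j _ => by ring
  simp_rw [key]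
  rw [integral_finset_sum _ (fun i _ => integrable_finset_sum _
    (fun j _ => (h i j).const_mul _))]
  refine Finset.sum_congr rfl fun i _ => ?_
  rw [integral_finset_sum _ (fun j _ => (h i j).const_mul _)]
  exact Finset.sum_congr rfl fun j _ => integral_const_mul _ _

/-- Covariate Cramér–Rao lower bound: if `G = ∫ s sᵀ dμ` is positive
definite and the influence function `ψ` satisfies the unit-correlation identity
`∫ ψ sᵀ dμ = I`, then `∫ ψ ψᵀ dμ − G⁻¹` is positive semidefinite
(i.e. `AsyCov(θ̂) ⪰ G⁻¹` in the Loewner order). -/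
theorem covariate_cramer_rao_lower_bound
    {d n : ℕ} (hd : 1 ≤ d) (hn : 1 ≤ n)
    (f : (Fin n → ℝ) → ℝ)
    (hf_meas : Measurable f) (hf_pos : ∀ x, 0 < f x)
    (hf_norm : ∫ x, f x = 1)
    (μ : Measure (Fin n → ℝ))
    (hμ : μ = volume.withDensity (fun x => ENNReal.ofReal (f x)))
    (s : Fin d → (Fin n → ℝ) → ℝ)
    (hs_L2 : ∀ i, MemLp (s i) 2 μ)
    (G : Matrix (Fin d) (Fin d) ℝ)
    (hG : G = fun i j => ∫ x, s i x * s j x ∂μ)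
    (hG_posdef : G.PosDef)
    (ψ : Fin d → (Fin n → ℝ) → ℝ)
    (hψ_L2 : ∀ i, MemLp (ψ i) 2 μ)
    (hψ_corr : ∀ i j, ∫ x, ψ i x * s j x ∂μ = (1 : Matrix (Fin d) (Fin d) ℝ) i j) :
    Matrix.PosSemidef ((Matrix.of fun i j => ∫ x, ψ i x * ψ j x ∂μ) - G⁻¹) := by
  have hGinv_herm : (G⁻¹).IsHermitian := hG_posdef.1.inv
  have hΨ_herm : (Matrix.of fun i j => ∫ x, ψ i x * ψ j x ∂μ).IsHermitian := by
    refine Matrix.IsHermitian.ext fun i j => ?_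
    simp only [Matrix.of_apply, RCLike.star_def, conj_trivial]
    simp_rw [mul_comm]
  have hint_ψψ : ∀ i j, Integrable (fun x => ψ i x * ψ j x) μ :=
    fun i j => memL2_integrable_mul (hψ_L2 i) (hψ_L2 j)
  have hint_ψs : ∀ i j, Integrable (fun x => ψ i x * s j x) μ :=
    fun i j => memL2_integrable_mul (hψ_L2 i) (hs_L2 j)
  have hint_ss : ∀ i j, Integrable (fun x => s i x * s j x) μ :=
    fun i j => memL2_integrable_mul (hs_L2 i) (hs_L2 j)
  rw [Matrix.posSemidef_iff_dotProduct_mulVec]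
  constructor
  · exact hΨ_herm.sub hGinv_herm
  intro a
  -- set up
  set c : Fin d → ℝ := G⁻¹.mulVec a with hc
  have hGinvG : G * G⁻¹ = 1 :=
    Matrix.mul_nonsing_inv G (isUnit_iff_ne_zero.mpr hG_posdef.det_pos.ne')
  have hGc : G.mulVec c = a := by
    rw [hc, Matrix.mulVec_mulVec, hGinvG, Matrix.one_mulVec]
  set u : (Fin n → ℝ) → ℝ := fun x => ∑ i, a i * ψ i x with hu
  set v : (Fin n → ℝ) → ℝ := fun x => ∑ j, c j * s j x with hv
  have hu2 : MemLp u 2 μ := by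
    have h := memLp_finset_sum' (μ := μ) Finset.univ
      (fun i (_ : i ∈ Finset.univ) => (hψ_L2 i).const_mul (a i))
    convert h using 1
    funext x; simp [hu]
  have hv2 : MemLp v 2 μ := by
    have h := memLp_finset_sum' (μ := μ) Finset.univ
      (fun i (_ : i ∈ Finset.univ) => (hs_L2 i).const_mul (c i))
    convert h using 1
    funext x; simp [hv]
  have Iuu : ∫ x, u x * u x ∂μ = ∑ i, ∑ j, a i * a j * ∫ x, ψ i x * ψ j x ∂μ :=
    integral_sum_mul_sum μ a a ψ ψ hint_ψψ
  have Iuv : ∫ x, u x * v x ∂μ = ∑ i, a i * c i := by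
    rw [hu, hv, integral_sum_mul_sum μ a c ψ s hint_ψs]
    refine Finset.sum_congr rfl fun i _ => ?_
    rw [Finset.sum_eq_single i]
    · rw [hψ_corr i i, Matrix.one_apply_eq, mul_one]
    · intro j _ hji
      rw [hψ_corr i j, Matrix.one_apply_ne (Ne.symm hji), mul_zero]
    · intro h; exact absurd (Finset.mem_univ i) h
  have Ivv : ∫ x, v x * v x ∂μ = ∑ i, a i * c i := by
    rw [hv, integral_sum_mul_sum μ c c s s hint_ss]
    have : ∑ i, ∑ j, c i * c j * ∫ x, s i x * s j x ∂μ = c ⬝ᵥ G.mulVec c := by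
      simp only [dotProduct, Matrix.mulVec, hG, Finset.mul_sum]
      refine Finset.sum_congr rfl fun i _ => Finset.sum_congr rfl fun j _ => by ring
    rw [this, hGc]
    simp [dotProduct, mul_comm]
  -- integrability of the products of u, v
  have hIuu : Integrable (fun x => u x * u x) μ := memL2_integrable_mul hu2 hu2
  have hIuv : Integrable (fun x => u x * v x) μ := memL2_integrable_mul hu2 hv2
  have hIvv : Integrable (fun x => v x * v x) μ := memL2_integrable_mul hv2 hv2
  have hsq : (0:ℝ) ≤ ∫ x, (u x - v x) ^ 2 ∂μ :=
    integral_nonneg fun x => sq_nonneg _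
  have hexp : ∫ x, (u x - v x) ^ 2 ∂μ
      = (∫ x, u x * u x ∂μ) - 2 * (∫ x, u x * v x ∂μ) + ∫ x, v x * v x ∂μ := by
    have h : (fun x => (u x - v x) ^ 2)
        = fun x => u x * u x - 2 * (u x * v x) + v x * v x := by
      funext x; ring
    have e2 : Integrable (fun x => 2 * (u x * v x)) μ := hIuv.const_mul 2
    have e1 : Integrable (fun x => u x * u x - 2 * (u x * v x)) μ := hIuu.sub e2
    rw [h, integral_add e1 hIvv, integral_sub hIuu e2, integral_const_mul]
  rw [hexp, Iuu, Iuv, Ivv] at hsq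
  -- now compute the quadratic form of the target matrix
  have hquad : (star a) ⬝ᵥ ((Matrix.of fun i j => ∫ x, ψ i x * ψ j x ∂μ) - G⁻¹).mulVec a
      = (∑ i, ∑ j, a i * a j * ∫ x, ψ i x * ψ j x ∂μ) - ∑ i, a i * c i := by
    rw [Matrix.sub_mulVec, dotProduct_sub]
    have h1 : star a ⬝ᵥ (Matrix.of fun i j => ∫ x, ψ i x * ψ j x ∂μ).mulVec a
        = ∑ i, ∑ j, a i * a j * ∫ x, ψ i x * ψ j x ∂μ := by
      simp only [dotProduct, Matrix.mulVec, Matrix.of_apply, star_trivial,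
        Finset.mul_sum]
      exact Finset.sum_congr rfl fun i _ => Finset.sum_congr rfl fun j _ => by ring
    have h2 : star a ⬝ᵥ G⁻¹.mulVec a = ∑ i, a i * c i := by
      simp [dotProduct, hc]
    rw [h1, h2]
  rw [hquad]
  linarith
end
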